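/- Let G be a finite simple graph, let I_c be a critical independent set of G, and let I_1^M, …, I_n^M be maximum independent sets of G. For each i, set A_i = I_c \ I_i^M and B_i = N(I_c) ∩ I_i^M. Then there exists a matching of G matching every vertex of ⋃_{i=1}^n A_i to a vertex of ⋃_{i=1}^n B_i. -/

import Mathlib

variable {V : Type*} [Fintype V] [DecidableEq V]

/-- `S` is an independent set of `G`. -/
def IsIndep (G : SimpleGraph V) (S : Set V) : Prop :=
  ∀ ⦃u⦄, u ∈ S → ∀ ⦃v⦄, v ∈ S → ¬ G.Adj u v

/-- The independence number `α(G)`: the maximum cardinality of an independent set. -/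
noncomputable def indepNum (G : SimpleGraph V) : ℕ :=
  sSup {n : ℕ | ∃ S : Set V, IsIndep G S ∧ S.ncard = n}

/-- `S` is a maximum independent set of `G`. -/
def IsMaxIndep (G : SimpleGraph V) (S : Set V) : Prop :=
  IsIndep G S ∧ ∀ T : Set V, IsIndep G T → T.ncard ≤ S.ncard

/-- The neighborhood `N(X)` of a set of vertices `X`. -/
def nbhdSet (G : SimpleGraph V) (X : Set V) : Set V :=
  {v | ∃ u ∈ X, G.Adj u v}

/-- The difference `d_G(X) = |X| - |N(X)|` of a vertex set `X`. -/
noncomputable def diffSet (G : SimpleGraph V) (X : Set V) : ℤ :=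
  (X.ncard : ℤ) - ((nbhdSet G X).ncard : ℤ)

/-- `I` is a critical independent set of `G`. -/
def IsCriticalIndep (G : SimpleGraph V) (I : Set V) : Prop :=
  IsIndep G I ∧ ∀ J : Set V, IsIndep G J → diffSet G J ≤ diffSet G I

/-- `I` is a maximum-cardinality critical independent set of `G`. -/
def IsMaxCriticalIndep (G : SimpleGraph V) (I : Set V) : Prop :=
  IsCriticalIndep G I ∧ ∀ J : Set V, IsCriticalIndep G J → J.ncard ≤ I.ncard

/-- `core(G)`: the intersection of all maximum independent sets of `G`. -/
def coreSet (G : SimpleGraph V) : Set V := ⋂₀ {S : Set V | IsMaxIndep G S}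

/-- `corona(G)`: the union of all maximum independent sets of `G`. -/
def coronaSet (G : SimpleGraph V) : Set V := ⋃₀ {S : Set V | IsMaxIndep G S}

/-- `ker(G)`: the intersection of all critical independent sets of `G`. -/
def kerSet (G : SimpleGraph V) : Set V := ⋂₀ {S : Set V | IsCriticalIndep G S}

/-- `diadem(G)`: the union of all critical independent sets of `G`. -/
def diademSet (G : SimpleGraph V) : Set V := ⋃₀ {S : Set V | IsCriticalIndep G S}

/-- `nucleus(G)`: the intersection of all maximum-cardinality critical independent
sets of `G`. -/
def nucleusSet (G : SimpleGraph V) : Set V := ⋂₀ {S : Set V | IsMaxCriticalIndep G S}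

/-- `C` is the vertex set of some odd cycle of `G`. -/
def IsOddCycleVertexSet (G : SimpleGraph V) (C : Set V) : Prop :=
  ∃ (v : V) (w : G.Walk v v), w.IsCycle ∧ Odd w.length ∧ {x | x ∈ w.support} = C

/-- The maximum cardinality of a set of pairwise vertex-distinct odd cycles of `G`,
i.e. the number of distinct vertex sets of odd cycles of `G`. -/
noncomputable def numVertexDistinctOddCycles (G : SimpleGraph V) : ℕ :=
  {C : Set V | IsOddCycleVertexSet G C}.ncard

/-- `E` is the edge set of some odd cycle of `G`. -/
def IsOddCycleEdgeSet (G : SimpleGraph V) (E : Set (Sym2 V)) : Prop :=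
  ∃ (v : V) (w : G.Walk v v), w.IsCycle ∧ Odd w.length ∧ {e | e ∈ w.edges} = E

/-- The number of (distinct) odd cycles of `G`, where a cycle is identified with
its edge set. -/
noncomputable def numOddCycles (G : SimpleGraph V) : ℕ :=
  {E : Set (Sym2 V) | IsOddCycleEdgeSet G E}.ncard

set_option linter.unusedSectionVars false in
lemma exists_fun_single (G : SimpleGraph V) {S I : Set V} (hS : IsIndep G S)
    (hI : IsMaxIndep G I) :
    ∃ f : V → V, Set.InjOn f (S \ I) ∧ ∀ a ∈ S \ I, G.Adj a (f a) ∧ f a ∈ I := by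
  classical
  set A : Set V := S \ I with hA
  let t : A → Finset V := fun x => G.neighborFinset x.val ∩ I.toFinset
  have hall : ∀ s : Finset A, s.card ≤ (s.biUnion t).card := by
    intro s
    by_contra hlt
    push_neg at hlt
    set Y : Finset V := s.biUnion t with hYdef
    set X : Finset V := s.image Subtype.val with hXdef
    have hXcard : X.card = s.card :=
      Finset.card_image_of_injective _ Subtype.val_injective
    have hYI : (↑Y : Set V) ⊆ I := by
      intro v hv
      rw [Finset.mem_coe, hYdef, Finset.mem_biUnion] at hv
      obtain ⟨x, hx, hv⟩ := hv
      simp only [t, Finset.mem_inter, Set.mem_toFinset] at hv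
      exact hv.2
    have hXSub : ∀ v ∈ X, v ∈ S \ I := by
      intro v hv
      rw [hXdef, Finset.mem_image] at hv
      obtain ⟨x, _, rfl⟩ := hv
      exact x.2
    have key : ∀ u ∈ X, ∀ v, v ∈ I → G.Adj u v → v ∈ Y := by
      intro u hu v hvI hadj
      rw [hXdef, Finset.mem_image] at hu
      obtain ⟨x, hx, rfl⟩ := hu
      rw [hYdef, Finset.mem_biUnion]
      exact ⟨x, hx, by simp [t, hvI, hadj]⟩
    set J : Set V := (I \ ↑Y) ∪ ↑X with hJ
    have hJindep : IsIndep G J := by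
      intro u hu v hv hadj
      rcases hu with hu | hu <;> rcases hv with hv | hv
      · exact hI.1 hu.1 hv.1 hadj
      · exact (hu.2) (key v hv u hu.1 hadj.symm)
      · exact (hv.2) (key u hu v hv.1 hadj)
      · exact hS (hXSub u hu).1 (hXSub v hv).1 hadj
    have hdisj : Disjoint (I \ (↑Y : Set V)) (↑X : Set V) := by
      rw [Set.disjoint_right]
      intro v hv
      exact fun hmem => (hXSub v hv).2 hmem.1
    have hYsub : (↑Y : Set V) ⊆ I := hYI
    have hc1 : J.ncard = (I \ (↑Y : Set V)).ncard + (↑X : Set V).ncard :=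
      Set.ncard_union_eq hdisj (Set.toFinite _) (Set.toFinite _)
    have hc2 : (I \ (↑Y : Set V)).ncard = I.ncard - Y.card := by
      rw [Set.ncard_diff hYsub (Set.toFinite _), Set.ncard_coe_finset]
    have hc3 : (↑X : Set V).ncard = X.card := Set.ncard_coe_finset _
    have hYle : Y.card ≤ I.ncard := by
      rw [← Set.ncard_coe_finset]
      exact Set.ncard_le_ncard hYsub (Set.toFinite _)
    have := hI.2 J hJindep
    omega
  obtain ⟨f', hf'inj, hf'mem⟩ :=
    (Finset.all_card_le_biUnion_card_iff_exists_injective t).mp hall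
  refine ⟨fun v => if h : v ∈ A then f' ⟨v, h⟩ else v, ?_, ?_⟩
  · intro a ha b hb hab
    simp only [dif_pos ha, dif_pos hb] at hab
    exact congrArg Subtype.val (hf'inj hab)
  · intro a ha
    have := hf'mem ⟨a, ha⟩
    simp only [t, Finset.mem_inter, SimpleGraph.mem_neighborFinset,
      Set.mem_toFinset] at this
    simp only [dif_pos ha]
    exact this

lemma exists_fun_family (G : SimpleGraph V) :
    ∀ (n : ℕ) (I : Fin n → Set V), (∀ j, IsMaxIndep G (I j)) →
    ∀ (S : Set V), IsIndep G S →
    ∃ f : V → V, Set.InjOn f (S \ ⋂ i, I i) ∧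
      ∀ a ∈ S \ ⋂ i, I i, G.Adj a (f a) ∧ f a ∈ (⋃ i, I i) \ S := by
  intro n
  induction n with
  | zero =>
    intro I hI S hS
    refine ⟨id, ?_, ?_⟩ <;> simp [Set.iInter_of_empty]
  | succ n ih =>
    intro I hI S hS
    obtain ⟨f₁, hf₁inj, hf₁⟩ := exists_fun_single G hS (hI 0)
    obtain ⟨f₂, hf₂inj, hf₂⟩ := ih (fun i => I i.succ) (fun i => hI i.succ) (I 0) (hI 0).1
    classical
    set A₁ : Set V := S \ I 0 with hA₁
    set A₂ : Set V := (S ∩ I 0) \ ⋂ i : Fin n, I i.succ with hA₂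
    have hsplit : ∀ a, a ∈ S \ ⋂ i, I i → a ∈ A₁ ∨ a ∈ A₂ := by
      intro a ⟨haS, haI⟩
      by_cases h0 : a ∈ I 0
      · right
        refine ⟨⟨haS, h0⟩, fun hmem => haI ?_⟩
        rw [Set.mem_iInter] at hmem ⊢
        intro i
        exact Fin.cases h0 (fun j => hmem j) i
      · exact Or.inl ⟨haS, h0⟩
    have hA₂dom : ∀ a ∈ A₂, a ∈ I 0 \ ⋂ i : Fin n, I i.succ := fun a ha => ⟨ha.1.2, ha.2⟩
    have hA₁A₂ : ∀ a ∈ A₂, a ∉ A₁ := fun a ha h => h.2 ha.1.2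
    refine ⟨fun v => if v ∈ A₁ then f₁ v else f₂ v, ?_, ?_⟩
    · intro a ha b hb hab
      rcases hsplit a ha with ha' | ha' <;> rcases hsplit b hb with hb' | hb'
      · simp only [if_pos ha', if_pos hb'] at hab
        exact hf₁inj ha' hb' hab
      · simp only [if_pos ha', if_neg (hA₁A₂ b hb')] at hab
        exact absurd ((hf₁ a ha').2) (by rw [hab]; exact fun h => (hf₂ b (hA₂dom b hb')).2.2 h)
      · simp only [if_neg (hA₁A₂ a ha'), if_pos hb'] at hab
        exact absurd ((hf₁ b hb').2) (by rw [← hab]; exact fun h => (hf₂ a (hA₂dom a ha')).2.2 h)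
      · simp only [if_neg (hA₁A₂ a ha'), if_neg (hA₁A₂ b hb')] at hab
        exact hf₂inj (hA₂dom a ha') (hA₂dom b hb') hab
    · intro a ha
      have haS : a ∈ S := ha.1
      rcases hsplit a ha with ha' | ha'
      · simp only [if_pos ha']
        obtain ⟨hadj, hmem⟩ := hf₁ a ha'
        refine ⟨hadj, Set.mem_iUnion.mpr ⟨0, hmem⟩, fun hfS => hS haS hfS hadj⟩
      · simp only [if_neg (hA₁A₂ a ha')]
        obtain ⟨hadj, hmem, _⟩ := hf₂ a (hA₂dom a ha')
        obtain ⟨j, hj⟩ := Set.mem_iUnion.mp hmem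
        exact ⟨hadj, Set.mem_iUnion.mpr ⟨j.succ, hj⟩, fun hfS => hS haS hfS hadj⟩

/-- Let `I_c` be a critical independent set of `G` and let
`I_1^M, …, I_n^M` be maximum independent sets of `G`. With `A_i = I_c \ I_i^M` and
`B_i = N(I_c) ∩ I_i^M`, there is a matching of `G` matching every vertex of
`⋃ i, A_i` to a vertex of `⋃ i, B_i`. -/
theorem matching_from_union_A_to_union_B (G : SimpleGraph V) (Ic : Set V)
    (hIc : IsCriticalIndep G Ic) (n : ℕ) (hn : 1 ≤ n) (I : Fin n → Set V)
    (hI : ∀ j, IsMaxIndep G (I j)) :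
    ∃ M : G.Subgraph, M.IsMatching ∧ (⋃ i, Ic \ I i) ⊆ M.verts ∧
      ∀ a ∈ ⋃ i, Ic \ I i, ∀ w : V, M.Adj a w → w ∈ ⋃ i, nbhdSet G Ic ∩ I i := by
  classical
  obtain ⟨f, hinj, hf⟩ := exists_fun_family G n I hI Ic hIc.1
  set A : Set V := Ic \ ⋂ i, I i with hAdef
  have hAeq : (⋃ i, Ic \ I i) = A := (Set.diff_iInter Ic I).symm
  have hfI : ∀ a ∈ A, f a ∈ ⋃ i, I i := fun a ha => (hf a ha).2.1
  have hfnotIc : ∀ a ∈ A, f a ∉ Ic := fun a ha => (hf a ha).2.2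
  refine ⟨{
    verts := A ∪ f '' A
    Adj := fun u v => (u ∈ A ∧ v = f u) ∨ (v ∈ A ∧ u = f v)
    adj_sub := by
      rintro u v (⟨h, rfl⟩ | ⟨h, rfl⟩)
      · exact (hf u h).1
      · exact ((hf v h).1).symm
    edge_vert := by
      rintro u v (⟨h, rfl⟩ | ⟨h, rfl⟩)
      · exact Or.inl h
      · exact Or.inr ⟨v, h, rfl⟩
    symm := by
      constructor
      rintro u v (h | h)
      · exact Or.inr h
      · exact Or.inl h }, ?_, ?_, ?_⟩
  · intro v hv
    by_cases hvA : v ∈ A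
    · refine ⟨f v, Or.inl ⟨hvA, rfl⟩, ?_⟩
      rintro y (⟨_, rfl⟩ | ⟨hyA, hvf⟩)
      · rfl
      · exact absurd hvA.1 (hvf ▸ hfnotIc y hyA)
    · obtain ⟨a, haA, rfl⟩ := hv.resolve_left hvA
      refine ⟨a, Or.inr ⟨haA, rfl⟩, ?_⟩
      rintro y (⟨hvA', _⟩ | ⟨hyA, hvf⟩)
      · exact absurd hvA' hvA
      · exact hinj hyA haA hvf.symm
  · rw [hAeq]
    exact Set.subset_union_left
  · intro a ha w hw
    rw [hAeq] at ha
    rcases hw with ⟨haA, rfl⟩ | ⟨hwA, hafw⟩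
    · obtain ⟨j, hj⟩ := Set.mem_iUnion.mp (hfI a ha)
      exact Set.mem_iUnion.mpr ⟨j, ⟨a, ha.1, (hf a ha).1⟩, hj⟩
    · exact absurd ha.1 (hafw ▸ hfnotIc w hwA)
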